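/- Let n ≥ l ≥ 1 be integers and let 0 < R' < R ≤ 1. Set A := {z ∈ ℂⁿ : 0 < |z_i| < R for 1 ≤ i ≤ l, and |z_i| < R for l < i ≤ n}. Let H : ℂⁿ → ℝ be continuous and nonnegative on A. Assume: for every ε > 0, every index 1 ≤ i ≤ l, and every z ∈ A, the one-variable function φ(ζ) := H(z₁, …, z_{i−1}, ζ, z_{i+1}, …, z_n)·|ζ|^ε satisfies (i) for every a with 0 < |a| < R and every r > 0 with the closed disc of center a and radius r contained in {ζ ∈ ℂ : 0 < |ζ| < R}, φ(a) ≤ (2π)⁻¹ ∫₀^{2π} φ(a + r·e^{iθ}) dθ, and (ii) φ(ζ) → 0 as ζ → 0 with ζ ≠ 0. Then for every z ∈ A with |z_i| ≤ R' for all 1 ≤ i ≤ l, one has H(z) ≤ sup { H(w) : |w_i| = R' for 1 ≤ i ≤ l and w_k = z_k for l < k ≤ n }. -/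

import Mathlib

open MeasureTheory intervalIntegral


lemma integral_normSq_circle (p : ℂ) (r : ℝ) :
    ∫ θ in (0:ℝ)..(2*Real.pi), Complex.normSq (p + r * Complex.exp (θ * Complex.I))
      = 2*Real.pi * (Complex.normSq p + r^2) := by
  have h : ∀ θ : ℝ, Complex.normSq (p + r * Complex.exp (θ * Complex.I))
      = (Complex.normSq p + r^2) + ((2*r*p.re) * Real.cos θ + (2*r*p.im) * Real.sin θ) := by
    intro θ
    rw [Complex.exp_mul_I]
    simp only [Complex.normSq_apply, Complex.add_re, Complex.add_im, Complex.mul_re,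
      Complex.mul_im, Complex.ofReal_re, Complex.ofReal_im, Complex.I_re, Complex.I_im,
      Complex.cos_ofReal_re, Complex.sin_ofReal_re, Complex.cos_ofReal_im, Complex.sin_ofReal_im]
    nlinarith [Real.sin_sq_add_cos_sq θ]
  have hi1 : IntervalIntegrable (fun θ : ℝ => (2*r*p.re) * Real.cos θ + (2*r*p.im) * Real.sin θ)
      volume 0 (2*Real.pi) :=
    (((continuous_const.mul Real.continuous_cos).add
      (continuous_const.mul Real.continuous_sin))).intervalIntegrable _ _
  simp only [h]
  rw [intervalIntegral.integral_add intervalIntegrable_const hi1,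
    intervalIntegral.integral_add (f := fun θ : ℝ => (2*r*p.re) * Real.cos θ)
      (g := fun θ : ℝ => (2*r*p.im) * Real.sin θ) ((continuous_const.mul Real.continuous_cos).intervalIntegrable _ _)
      ((continuous_const.mul Real.continuous_sin).intervalIntegrable _ _),
    intervalIntegral.integral_const, intervalIntegral.integral_const_mul,
    intervalIntegral.integral_const_mul, integral_cos, integral_sin]
  simp [Real.sin_two_pi, Real.cos_two_pi]

lemma maxPrinciple_ball (ψ : ℂ → ℝ) (R' : ℝ) (hR' : 0 < R')
    (hc : ContinuousOn ψ (Metric.closedBall 0 R'))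
    (hsm : ∀ p ∈ Metric.ball (0:ℂ) R', ∃ r : ℝ, 0 < r ∧
      (∀ θ : ℝ, p + (r:ℂ) * Complex.exp (θ * Complex.I) ∈ Metric.ball (0:ℂ) R') ∧
      ψ p ≤ (2 * Real.pi)⁻¹ *
        ∫ θ in (0:ℝ)..(2*Real.pi), ψ (p + (r:ℂ) * Complex.exp (θ * Complex.I))) :
    ∀ a ∈ Metric.closedBall (0:ℂ) R', ψ a ≤ sSup (ψ '' Metric.sphere 0 R') := by
  intro a ha
  have hπ : (0:ℝ) < Real.pi := Real.pi_pos
  have key : ∀ η : ℝ, 0 < η → ψ a ≤ sSup (ψ '' Metric.sphere 0 R') + η * R'^2 := by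
    intro η hη
    set ψη := fun x : ℂ => ψ x + η * Complex.normSq x with hψηdef
    have hcη : ContinuousOn ψη (Metric.closedBall 0 R') :=
      hc.add ((continuous_const.mul Complex.continuous_normSq).continuousOn)
    obtain ⟨p, hpmem, hpmax⟩ := (isCompact_closedBall (0:ℂ) R').exists_isMaxOn
      ⟨0, Metric.mem_closedBall_self hR'.le⟩ hcη
    have hple : ‖p‖ ≤ R' := by
      simpa [Complex.dist_eq] using (Metric.mem_closedBall.mp hpmem)
    have hpsphere : ‖p‖ = R' := by
      by_contra hne
      have hpball : p ∈ Metric.ball (0:ℂ) R' := by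
        simp [Metric.mem_ball, Complex.dist_eq, lt_of_le_of_ne hple hne]
      obtain ⟨r, hr, hball, hmean⟩ := hsm p hpball
      set c := fun θ : ℝ => p + (r:ℂ) * Complex.exp (θ * Complex.I) with hcdef
      have hcc : Continuous c := by
        apply continuous_const.add
        exact continuous_const.mul (Complex.continuous_exp.comp
          ((Complex.continuous_ofReal).mul continuous_const))
      have hcball : ∀ θ, c θ ∈ Metric.closedBall (0:ℂ) R' :=
        fun θ => Metric.ball_subset_closedBall (hball θ)
      have hcψ : Continuous (fun θ => ψ (c θ)) := hc.comp_continuous hcc hcball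
      have hint1 : IntervalIntegrable (fun θ => ψ (c θ)) volume 0 (2*Real.pi) :=
        hcψ.intervalIntegrable _ _
      have hint2 : IntervalIntegrable (fun θ => η * Complex.normSq (c θ)) volume 0 (2*Real.pi) :=
        (continuous_const.mul (Complex.continuous_normSq.comp hcc)).intervalIntegrable _ _
      have hintη : IntervalIntegrable (fun θ => ψη (c θ)) volume 0 (2*Real.pi) :=
        hint1.add hint2
      have hsplit : (∫ θ in (0:ℝ)..(2*Real.pi), ψη (c θ))
          = (∫ θ in (0:ℝ)..(2*Real.pi), ψ (c θ)) + η * (2*Real.pi*(Complex.normSq p + r^2)) := by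
        have : (fun θ => ψη (c θ)) = fun θ => ψ (c θ) + η * Complex.normSq (c θ) := rfl
        rw [this, intervalIntegral.integral_add hint1 hint2,
          intervalIntegral.integral_const_mul, integral_normSq_circle]
      have hub : (∫ θ in (0:ℝ)..(2*Real.pi), ψη (c θ)) ≤ 2*Real.pi * ψ p + η * (2 * Real.pi * Complex.normSq p) := by
        have h1 : (∫ θ in (0:ℝ)..(2*Real.pi), ψη (c θ))
            ≤ ∫ _θ in (0:ℝ)..(2*Real.pi), ψη p := by
          apply intervalIntegral.integral_mono_on (by positivity) hintη intervalIntegrable_const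
          intro θ _
          exact hpmax (hcball θ)
        simp only [intervalIntegral.integral_const, sub_zero, smul_eq_mul] at h1
        rw [show ψη p = ψ p + η * Complex.normSq p from rfl] at h1
        linarith
      have hlb : 2*Real.pi * ψ p ≤ ∫ θ in (0:ℝ)..(2*Real.pi), ψ (c θ) := by
        have h2 := mul_le_mul_of_nonneg_left hmean (le_of_lt (by positivity : (0:ℝ) < 2*Real.pi))
        rwa [← mul_assoc, mul_inv_cancel₀ (by positivity : (2*Real.pi) ≠ 0), one_mul] at h2
      have hpos : 0 < η * (2*Real.pi*r^2) := by positivity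
      nlinarith [hpos]
    have hpS : p ∈ Metric.sphere (0:ℂ) R' := by
      simp [Metric.mem_sphere, Complex.dist_eq, hpsphere]
    have hbdd : BddAbove (ψ '' Metric.sphere 0 R') :=
      (isCompact_sphere (0:ℂ) R').bddAbove_image (hc.mono Metric.sphere_subset_closedBall)
    have h3 : ψ p ≤ sSup (ψ '' Metric.sphere 0 R') := le_csSup hbdd ⟨p, hpS, rfl⟩
    have h4 : Complex.normSq p = R'^2 := by
      rw [← Complex.sq_norm, hpsphere]
    have h1 : ψ a ≤ ψη a := le_add_of_nonneg_right (mul_nonneg hη.le (Complex.normSq_nonneg a))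
    have h2 : ψη a ≤ ψη p := hpmax ha
    have h5 : ψη p = ψ p + η * R'^2 := by rw [hψηdef]; simp [h4]
    have h6 : ψη a = ψ a + η * Complex.normSq a := rfl
    linarith
  refine le_of_forall_pos_le_add fun ε hε => ?_
  have h := key (ε / R'^2) (div_pos hε (by positivity))
  calc ψ a ≤ sSup (ψ '' Metric.sphere 0 R') + (ε / R'^2) * R'^2 := h
    _ = sSup (ψ '' Metric.sphere 0 R') + ε := by field_simp

lemma pd_step (n l : ℕ) (R R' : ℝ) (hR'0 : 0 < R') (hR'R : R' < R)
    (H : EuclideanSpace ℂ (Fin n) → ℝ)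
    (hHc : ∀ w : EuclideanSpace ℂ (Fin n),
      (∀ j : Fin n, ‖w j‖ < R ∧ ((j:ℕ) < l → 0 < ‖w j‖)) →
      ContinuousAt H w)
    (hnonneg : ∀ w : EuclideanSpace ℂ (Fin n),
      (∀ j : Fin n, ‖w j‖ < R ∧ ((j:ℕ) < l → 0 < ‖w j‖)) → 0 ≤ H w)
    (i : Fin n) (hil : (i:ℕ) < l) (z : EuclideanSpace ℂ (Fin n))
    (hz : ∀ j : Fin n, ‖z j‖ < R ∧ ((j:ℕ) < l → 0 < ‖z j‖))
    (hsubm : ∀ ε : ℝ, 0 < ε → ∀ a : ℂ, 0 < ‖a‖ → ‖a‖ < R → ∀ r : ℝ, 0 < r →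
        Metric.closedBall a r ⊆ {ζ : ℂ | 0 < ‖ζ‖ ∧ ‖ζ‖ < R} →
        H (WithLp.toLp 2 (Function.update z i a)) * ‖a‖ ^ ε ≤ (2 * Real.pi)⁻¹ *
          ∫ θ in (0:ℝ)..(2 * Real.pi),
            H (WithLp.toLp 2 (Function.update z i (a + r * Complex.exp (θ * Complex.I)))) *
              ‖a + r * Complex.exp (θ * Complex.I)‖ ^ ε)
    (htend : ∀ ε : ℝ, 0 < ε →
      Filter.Tendsto (fun ζ : ℂ => H (WithLp.toLp 2 (Function.update z i ζ)) * ‖ζ‖ ^ ε)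
        (nhdsWithin 0 {ζ : ℂ | ζ ≠ 0}) (nhds 0))
    (hzi : ‖z i‖ ≤ R') (C : ℝ) (hC : 0 ≤ C)
    (hbound : ∀ ζ : ℂ, ‖ζ‖ = R' → H (WithLp.toLp 2 (Function.update z i ζ)) ≤ C) :
    H z ≤ C := by
  have hR0 : 0 < R := hR'0.trans hR'R
  have hzi0 : 0 < ‖z i‖ := (hz i).2 hil
  have hupdmem : ∀ ζ : ℂ, 0 < ‖ζ‖ → ‖ζ‖ < R →
      ∀ j : Fin n, ‖Function.update z i ζ j‖ < R ∧
        ((j:ℕ) < l → 0 < ‖Function.update z i ζ j‖) := by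
    intro ζ h1 h2 j
    rcases eq_or_ne j i with rfl | hji
    · simp only [PiLp.toLp_apply, Function.update_self]
      exact ⟨h2, fun _ => h1⟩
    · simp only [PiLp.toLp_apply, Function.update_of_ne hji]
      exact hz j
  have hupdc : Continuous (fun ζ : ℂ => WithLp.toLp 2 (Function.update z i ζ)) := by
    apply (PiLp.continuous_toLp 2 _).comp
    apply continuous_pi
    intro j
    simp only [Function.update_apply]
    split_ifs
    · exact continuous_id
    · exact continuous_const
  suffices hkey : ∀ ε : ℝ, 0 < ε → H z * ‖z i‖ ^ ε ≤ C * R' ^ ε by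
    set c := ‖z i‖ with hc
    have h2 : ∀ ε : ℝ, 0 < ε → H z ≤ C * R' ^ ε / c ^ ε := fun ε hε =>
      (le_div_iff₀ (Real.rpow_pos_of_pos hzi0 ε)).2 (hkey ε hε)
    have heq : ∀ ε : ℝ, C * R' ^ ε / c ^ ε = C * (R'/c) ^ ε := fun ε => by
      rw [Real.div_rpow hR'0.le (le_of_lt hzi0), mul_div_assoc]
    have htendC : Filter.Tendsto (fun ε : ℝ => C * (R'/c) ^ ε)
        (nhdsWithin 0 (Set.Ioi 0)) (nhds C) := by
      have hb : (0:ℝ) < R'/c := div_pos hR'0 hzi0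
      have hco : ContinuousAt (fun ε : ℝ => (R'/c) ^ ε) 0 :=
        Real.continuousAt_const_rpow hb.ne'
      have h3 := hco.tendsto.const_mul C
      rw [Real.rpow_zero, mul_one] at h3
      exact h3.mono_left nhdsWithin_le_nhds
    refine ge_of_tendsto htendC ?_
    filter_upwards [self_mem_nhdsWithin] with ε hε
    rw [← heq ε]
    exact h2 ε hε
  intro ε hε
  set ψ : ℂ → ℝ := fun ζ => H (WithLp.toLp 2 (Function.update z i ζ)) * ‖ζ‖ ^ ε with hψ
  have hψ0 : ψ 0 = 0 := by
    simp [hψ, Real.zero_rpow hε.ne']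
  have hψc : ContinuousOn ψ (Metric.closedBall 0 R') := by
    intro ζ₀ hζ₀
    rcases eq_or_ne ζ₀ 0 with rfl | hne
    · refine ContinuousAt.continuousWithinAt ?_
      rw [ContinuousAt, hψ0]
      rw [← nhdsNE_sup_pure (0:ℂ)]
      rw [Filter.tendsto_sup]
      constructor
      · exact htend ε hε
      · rw [← hψ0]
        exact tendsto_pure_nhds ψ 0
    · have habs : 0 < ‖ζ₀‖ := norm_pos_iff.mpr hne
      have hle : ‖ζ₀‖ ≤ R' := by
        simpa [Complex.dist_eq] using (Metric.mem_closedBall.mp hζ₀)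
      exact (((hHc _ (hupdmem ζ₀ habs (hle.trans_lt hR'R))).comp hupdc.continuousAt).mul
        ((continuous_norm.continuousAt).rpow_const (Or.inr hε.le))).continuousWithinAt
  have hψsm : ∀ p ∈ Metric.ball (0:ℂ) R', ∃ r : ℝ, 0 < r ∧
      (∀ θ : ℝ, p + (r:ℂ) * Complex.exp (θ * Complex.I) ∈ Metric.ball (0:ℂ) R') ∧
      ψ p ≤ (2 * Real.pi)⁻¹ *
        ∫ θ in (0:ℝ)..(2*Real.pi), ψ (p + (r:ℂ) * Complex.exp (θ * Complex.I)) := by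
    intro p hp
    have hpR' : ‖p‖ < R' := by
      simpa [Complex.dist_eq] using (Metric.mem_ball.mp hp)
    have habsexp : ∀ (r θ : ℝ), ‖(r:ℂ) * Complex.exp (θ * Complex.I)‖ = |r| := by
      intro r θ
      rw [norm_mul, Complex.norm_exp_ofReal_mul_I, mul_one, Complex.norm_real, Real.norm_eq_abs]
    rcases eq_or_ne p 0 with rfl | hne
    · refine ⟨R'/2, by positivity, ?_, ?_⟩
      · intro θ
        rw [Metric.mem_ball, Complex.dist_eq, zero_add, sub_zero, habsexp,
          abs_of_pos (by positivity : (0:ℝ) < R'/2)]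
        linarith
      · rw [hψ0]
        apply mul_nonneg (by positivity)
        apply intervalIntegral.integral_nonneg (by positivity)
        intro θ _
        apply mul_nonneg _ (Real.rpow_nonneg (norm_nonneg _) ε)
        apply hnonneg
        apply hupdmem
        · rw [zero_add, habsexp, abs_of_pos (by positivity : (0:ℝ) < R'/2)]
          positivity
        · rw [zero_add, habsexp, abs_of_pos (by positivity : (0:ℝ) < R'/2)]
          linarith
    · have hpp : 0 < ‖p‖ := norm_pos_iff.mpr hne
      set ρ := min (‖p‖) (R' - ‖p‖) / 2 with hρ
      have hρ0 : 0 < ρ := by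
        apply div_pos (lt_min hpp (by linarith)) (by norm_num)
      have hρ1 : ρ ≤ ‖p‖ / 2 :=
        div_le_div_of_nonneg_right (min_le_left _ _) (by norm_num)
      have hρ2 : ρ ≤ (R' - ‖p‖) / 2 :=
        div_le_div_of_nonneg_right (min_le_right _ _) (by norm_num)
      refine ⟨ρ, hρ0, ?_, ?_⟩
      · intro θ
        rw [Metric.mem_ball, Complex.dist_eq, sub_zero]
        have t1 : ‖p + (ρ:ℂ) * Complex.exp (θ * Complex.I)‖
            ≤ ‖p‖ + ρ := by
          calc ‖p + (ρ:ℂ) * Complex.exp (θ * Complex.I)‖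
              ≤ ‖p‖ + ‖(ρ:ℂ) * Complex.exp (θ * Complex.I)‖ :=
                norm_add_le _ _
            _ = ‖p‖ + ρ := by rw [habsexp, abs_of_pos hρ0]
        linarith
      · apply hsubm ε hε p hpp (hpR'.trans hR'R) ρ hρ0
        intro x hx
        have hd : ‖x - p‖ ≤ ρ := by
          simpa [Complex.dist_eq] using (Metric.mem_closedBall.mp hx)
        have t1 : ‖p‖ ≤ ‖x‖ + ‖x - p‖ := by
          calc ‖p‖ = ‖x + (p - x)‖ := by ring_nf
            _ ≤ ‖x‖ + ‖p - x‖ := norm_add_le _ _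
            _ = ‖x‖ + ‖x - p‖ := by rw [norm_sub_rev]
        have t2 : ‖x‖ ≤ ‖p‖ + ‖x - p‖ := by
          calc ‖x‖ = ‖p + (x - p)‖ := by ring_nf
            _ ≤ ‖p‖ + ‖x - p‖ := norm_add_le _ _
        constructor
        · show 0 < ‖x‖
          linarith
        · show ‖x‖ < R
          linarith
  have hmp := maxPrinciple_ball ψ R' hR'0 hψc hψsm (z i)
    (by rw [Metric.mem_closedBall, Complex.dist_eq, sub_zero]; exact hzi)
  have hsup : sSup (ψ '' Metric.sphere 0 R') ≤ C * R' ^ ε := by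
    apply Real.sSup_le
    · rintro x ⟨ζ, hζ, rfl⟩
      have hζR : ‖ζ‖ = R' := by
        simpa [Complex.dist_eq] using hζ
      have hval : ψ ζ = H (WithLp.toLp 2 (Function.update z i ζ)) * R' ^ ε := by
        rw [hψ]; simp only; rw [hζR]
      rw [hval]
      exact mul_le_mul_of_nonneg_right (hbound ζ hζR) (Real.rpow_nonneg hR'0.le ε)
    · positivity
  have hψz : ψ (z i) = H z * ‖z i‖ ^ ε := by
    rw [hψ]; simp only; rw [Function.update_eq_self, WithLp.toLp_ofLp]
  calc H z * ‖z i‖ ^ ε = ψ (z i) := hψz.symm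
    _ ≤ sSup (ψ '' Metric.sphere 0 R') := hmp
    _ ≤ C * R' ^ ε := hsup

/-- Proposition 7.4 (scalar content): maximum principle on a partially
punctured polydisk, obtained by applying the one-variable twisted maximum
principle in each punctured coordinate. -/
theorem twisted_maximum_principle_polydisk (n l : ℕ) (hl : 1 ≤ l) (hln : l ≤ n)
    (R R' : ℝ) (hR'0 : 0 < R') (hR'R : R' < R) (hR : R ≤ 1)
    (A : Set (EuclideanSpace ℂ (Fin n)))
    (hA : A = {z : EuclideanSpace ℂ (Fin n) | ∀ i : Fin n,
      ‖z i‖ < R ∧ ((i : ℕ) < l → 0 < ‖z i‖)})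
    (H : EuclideanSpace ℂ (Fin n) → ℝ)
    (hcont : ContinuousOn H A)
    (hnonneg : ∀ z ∈ A, 0 ≤ H z)
    (hsub : ∀ ε : ℝ, 0 < ε → ∀ i : Fin n, (i : ℕ) < l → ∀ z ∈ A,
      (∀ a : ℂ, 0 < ‖a‖ → ‖a‖ < R → ∀ r : ℝ, 0 < r →
        Metric.closedBall a r ⊆ {ζ : ℂ | 0 < ‖ζ‖ ∧ ‖ζ‖ < R} →
        H (WithLp.toLp 2 (Function.update z i a)) * ‖a‖ ^ ε ≤ (2 * Real.pi)⁻¹ *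
          ∫ θ in (0:ℝ)..(2 * Real.pi),
            H (WithLp.toLp 2 (Function.update z i (a + r * Complex.exp (θ * Complex.I)))) *
              ‖a + r * Complex.exp (θ * Complex.I)‖ ^ ε) ∧
      Filter.Tendsto (fun ζ : ℂ => H (WithLp.toLp 2 (Function.update z i ζ)) * ‖ζ‖ ^ ε)
        (nhdsWithin 0 {ζ : ℂ | ζ ≠ 0}) (nhds 0)) :
    ∀ z ∈ A, (∀ i : Fin n, (i : ℕ) < l → ‖z i‖ ≤ R') →
      H z ≤ sSup (H '' {w : EuclideanSpace ℂ (Fin n) |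
        (∀ i : Fin n, (i : ℕ) < l → ‖w i‖ = R') ∧
        ∀ k : Fin n, l ≤ (k : ℕ) → w k = z k}) := by
  have hR0 : 0 < R := hR'0.trans hR'R
  -- A is open
  have hAopen : IsOpen A := by
    rw [hA]
    have he : {z : EuclideanSpace ℂ (Fin n) | ∀ i : Fin n,
        ‖z i‖ < R ∧ ((i : ℕ) < l → 0 < ‖z i‖)}
        = ⋂ i : Fin n, {z : EuclideanSpace ℂ (Fin n) |
            ‖z i‖ < R ∧ ((i : ℕ) < l → 0 < ‖z i‖)} := by
      ext w; simp [Set.mem_iInter]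
    rw [he]
    refine isOpen_iInter_of_finite fun i => ?_
    have hcabs : Continuous (fun z : EuclideanSpace ℂ (Fin n) => ‖z i‖) :=
      continuous_norm.comp ((continuous_apply i).comp (PiLp.continuous_ofLp 2 _))
    by_cases h : (i:ℕ) < l
    · have : {z : EuclideanSpace ℂ (Fin n) |
          ‖z i‖ < R ∧ ((i : ℕ) < l → 0 < ‖z i‖)}
          = {z | ‖z i‖ < R} ∩ {z | 0 < ‖z i‖} := by
        ext w; simp [h]
      rw [this]
      exact (isOpen_lt hcabs continuous_const).inter (isOpen_lt continuous_const hcabs)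
    · have : {z : EuclideanSpace ℂ (Fin n) |
          ‖z i‖ < R ∧ ((i : ℕ) < l → 0 < ‖z i‖)}
          = {z | ‖z i‖ < R} := by
        ext w; simp [h]
      rw [this]
      exact isOpen_lt hcabs continuous_const
  have hHc : ∀ w ∈ A, ContinuousAt H w := fun w hw => hcont.continuousAt (hAopen.mem_nhds hw)
  subst hA
  -- torus sets
  have hTsub : ∀ z ∈ ({z : EuclideanSpace ℂ (Fin n) | ∀ i : Fin n,
        ‖z i‖ < R ∧ ((i : ℕ) < l → 0 < ‖z i‖)} :
        Set (EuclideanSpace ℂ (Fin n))),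
      {w : EuclideanSpace ℂ (Fin n) |
        (∀ i : Fin n, (i : ℕ) < l → ‖w i‖ = R') ∧
        ∀ k : Fin n, l ≤ (k : ℕ) → w k = z k} ⊆
      {z : EuclideanSpace ℂ (Fin n) | ∀ i : Fin n,
        ‖z i‖ < R ∧ ((i : ℕ) < l → 0 < ‖z i‖)} := by
    intro z hz w hw j
    rcases lt_or_ge (j:ℕ) l with h | h
    · rw [hw.1 j h]
      exact ⟨hR'R, fun _ => hR'0⟩
    · rw [hw.2 j h]
      exact hz j
  have hTcomp : ∀ z : EuclideanSpace ℂ (Fin n),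
      IsCompact {w : EuclideanSpace ℂ (Fin n) |
        (∀ i : Fin n, (i : ℕ) < l → ‖w i‖ = R') ∧
        ∀ k : Fin n, l ≤ (k : ℕ) → w k = z k} := by
    intro z
    have he : {w : EuclideanSpace ℂ (Fin n) |
        (∀ i : Fin n, (i : ℕ) < l → ‖w i‖ = R') ∧
        ∀ k : Fin n, l ≤ (k : ℕ) → w k = z k}
        = WithLp.ofLp ⁻¹' Set.univ.pi (fun i : Fin n => if (i:ℕ) < l then Metric.sphere (0:ℂ) R' else {z i}) := by
      ext w
      simp only [Set.mem_setOf_eq, Set.mem_preimage, Set.mem_univ_pi]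
      constructor
      · rintro ⟨h1, h2⟩ i
        by_cases h : (i:ℕ) < l
        · simp [h, Complex.dist_eq, h1 i h]
        · simp [h, h2 i (not_lt.mp h)]
      · intro hw
        constructor
        · intro i hi
          have h : w i ∈ (if (i:ℕ) < l then Metric.sphere (0:ℂ) R' else {z i}) :=
            hw i
          rw [if_pos hi] at h
          simpa [Complex.dist_eq] using h
        · intro k hk
          have h : w k ∈ (if (k:ℕ) < l then Metric.sphere (0:ℂ) R' else {z k}) :=
            hw k
          rwa [if_neg (not_lt.mpr hk), Set.mem_singleton_iff] at h
    rw [he]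
    exact (PiLp.homeomorph 2 _).isCompact_preimage.mpr <| isCompact_univ_pi fun i => by
      by_cases h : (i:ℕ) < l
      · rw [if_pos h]; exact isCompact_sphere _ _
      · rw [if_neg h]; exact isCompact_singleton
  have hbdd : ∀ z ∈ ({z : EuclideanSpace ℂ (Fin n) | ∀ i : Fin n,
        ‖z i‖ < R ∧ ((i : ℕ) < l → 0 < ‖z i‖)} :
        Set (EuclideanSpace ℂ (Fin n))),
      BddAbove (H '' {w : EuclideanSpace ℂ (Fin n) |
        (∀ i : Fin n, (i : ℕ) < l → ‖w i‖ = R') ∧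
        ∀ k : Fin n, l ≤ (k : ℕ) → w k = z k}) :=
    fun z hz => (hTcomp z).bddAbove_image (hcont.mono (hTsub z hz))
  have hS0 : ∀ z ∈ ({z : EuclideanSpace ℂ (Fin n) | ∀ i : Fin n,
        ‖z i‖ < R ∧ ((i : ℕ) < l → 0 < ‖z i‖)} :
        Set (EuclideanSpace ℂ (Fin n))),
      0 ≤ sSup (H '' {w : EuclideanSpace ℂ (Fin n) |
        (∀ i : Fin n, (i : ℕ) < l → ‖w i‖ = R') ∧
        ∀ k : Fin n, l ≤ (k : ℕ) → w k = z k}) := by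
    intro z hz
    set w₀ : EuclideanSpace ℂ (Fin n) := WithLp.toLp 2 (fun j => if (j:ℕ) < l then (R':ℂ) else z j) with hw₀
    have hw₀T : w₀ ∈ {w : EuclideanSpace ℂ (Fin n) |
        (∀ i : Fin n, (i : ℕ) < l → ‖w i‖ = R') ∧
        ∀ k : Fin n, l ≤ (k : ℕ) → w k = z k} := by
      constructor
      · intro i hi
        show ‖if (i:ℕ) < l then (R':ℂ) else z i‖ = R'
        rw [if_pos hi, Complex.norm_real, Real.norm_eq_abs, abs_of_pos hR'0]
      · intro k hk
        show (if (k:ℕ) < l then (R':ℂ) else z k) = z k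
        rw [if_neg (not_lt.mpr hk)]
    refine le_trans (hnonneg w₀ (hTsub z hz hw₀T)) (le_csSup (hbdd z hz) ⟨w₀, hw₀T, rfl⟩)
  -- main induction
  have main : ∀ m : ℕ, ∀ z ∈ ({z : EuclideanSpace ℂ (Fin n) | ∀ i : Fin n,
        ‖z i‖ < R ∧ ((i : ℕ) < l → 0 < ‖z i‖)} :
        Set (EuclideanSpace ℂ (Fin n))),
      (∀ i : Fin n, (i : ℕ) < l → ‖z i‖ ≤ R') →
      (∀ i : Fin n, m ≤ (i:ℕ) → (i : ℕ) < l → ‖z i‖ = R') →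
      H z ≤ sSup (H '' {w : EuclideanSpace ℂ (Fin n) |
        (∀ i : Fin n, (i : ℕ) < l → ‖w i‖ = R') ∧
        ∀ k : Fin n, l ≤ (k : ℕ) → w k = z k}) := by
    intro m
    induction m with
    | zero =>
      intro z hz _ hall
      exact le_csSup (hbdd z hz) ⟨z, ⟨fun i hi => hall i (Nat.zero_le _) hi, fun k _ => rfl⟩, rfl⟩
    | succ m ih =>
      intro z hz hle heq
      by_cases hml : m < l
      · set i₀ : Fin n := ⟨m, hml.trans_le hln⟩ with hi₀
        have hi₀l : (i₀:ℕ) < l := hml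
        apply pd_step n l R R' hR'0 hR'R H (fun w hw => hHc w hw) (fun w hw => hnonneg w hw)
          i₀ hi₀l z (fun j => hz j)
          (fun ε hε => (hsub ε hε i₀ hi₀l z hz).1)
          (fun ε hε => (hsub ε hε i₀ hi₀l z hz).2)
          (hle i₀ hi₀l) _ (hS0 z hz)
        intro ζ hζ
        set z' := WithLp.toLp 2 (Function.update z i₀ ζ) with hz'def
        have hz' : z' ∈ ({z : EuclideanSpace ℂ (Fin n) | ∀ i : Fin n,
            ‖z i‖ < R ∧ ((i : ℕ) < l → 0 < ‖z i‖)} :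
            Set (EuclideanSpace ℂ (Fin n))) := by
          intro j
          rcases eq_or_ne j i₀ with rfl | hji
          · rw [hz'def]
            simp only [PiLp.toLp_apply, Function.update_self]
            rw [hζ]
            exact ⟨hR'R, fun _ => hR'0⟩
          · rw [hz'def]
            simp only [PiLp.toLp_apply, Function.update_of_ne hji]
            exact hz j
        have h1 := ih z' hz' ?_ ?_
        · have h2 : {w : EuclideanSpace ℂ (Fin n) |
              (∀ i : Fin n, (i : ℕ) < l → ‖w i‖ = R') ∧
              ∀ k : Fin n, l ≤ (k : ℕ) → w k = z' k}
              = {w : EuclideanSpace ℂ (Fin n) |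
              (∀ i : Fin n, (i : ℕ) < l → ‖w i‖ = R') ∧
              ∀ k : Fin n, l ≤ (k : ℕ) → w k = z k} := by
            ext w
            simp only [Set.mem_setOf_eq, and_congr_right_iff]
            intro _
            constructor
            · intro h k hk
              rw [h k hk, hz'def, WithLp.ofLp_toLp, Function.update_of_ne]
              intro hk'
              rw [hk'] at hk
              simp only [hi₀] at hk
              omega
            · intro h k hk
              rw [h k hk, hz'def]; show z k = Function.update z i₀ ζ k; rw [Function.update_of_ne]
              intro hk'
              rw [hk'] at hk
              simp only [hi₀] at hk
              omega
          rwa [h2] at h1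
        · intro i hi
          rcases eq_or_ne i i₀ with rfl | hii
          · rw [hz'def]; simp only [PiLp.toLp_apply, Function.update_self]; rw [hζ]
          · rw [hz'def]; simp only [PiLp.toLp_apply, Function.update_of_ne hii]; exact hle i hi
        · intro i hmi hil
          rcases eq_or_ne i i₀ with rfl | hii
          · rw [hz'def]; simp only [PiLp.toLp_apply, Function.update_self]; exact hζ
          · rw [hz'def]; simp only [PiLp.toLp_apply, Function.update_of_ne hii]
            apply heq i _ hil
            have : (i:ℕ) ≠ m := by
              intro hc
              apply hii
              apply Fin.ext
              rw [hc, hi₀]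
            omega
      · -- m ≥ l : heq hypothesis for ih is vacuous
        apply ih z hz hle
        intro i hmi hil'
        exact absurd (hil'.trans_le (not_lt.mp hml)) (not_lt.mpr hmi)
  intro z hz hle
  exact main l z hz hle (fun i h1 h2 => absurd h2 (not_lt.mpr h1))
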